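/- (Implicit duality for a single ground set) Let K_{SP} be a generalized number lattice on S ⊎ P and K_P a generalized number lattice on P. Then (K_{SP} ↔ K_P)^d = K_{SP}^d ↔ K_P^d. In particular if V_{SP} is a vector space, (V_{SP} ↔ K_P)^d = V_{SP}^⊥ ↔ K_P^d. -/

import Mathlib

set_option linter.unusedSectionVars false
set_option maxHeartbeats 1000000
open Module


/-- A generalized number lattice. -/
def IsGenNumLat {M : Type*} [AddCommGroup M] [Module ℚ M] (K : Set M) : Prop :=
  ∃ (n k : ℕ) (b : Fin n → M) (c : Fin k → M),
    K = {x | ∃ (l : Fin n → ℤ) (m : Fin k → ℚ),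
      x = (∑ i, (l i : ℚ) • b i) + ∑ j, m j • c j}

/-- The dual of a collection of vectors on a single index set. -/
def dualLat {X : Type*} [Fintype X] (K : Set (X → ℚ)) : Set (X → ℚ) :=
  {g | ∀ f ∈ K, ∃ z : ℤ, ∑ x, f x * g x = (z : ℚ)}

/-- The dual of a collection of vectors on a disjoint union, represented as pairs. -/
def dualLat2 {A B : Type*} [Fintype A] [Fintype B]
    (K : Set ((A → ℚ) × (B → ℚ))) : Set ((A → ℚ) × (B → ℚ)) :=
  {g | ∀ f ∈ K, ∃ z : ℤ, (∑ a, f.1 a * g.1 a) + ∑ b, f.2 b * g.2 b = (z : ℚ)}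

section Abstract

variable {V : Type*} [AddCommGroup V] [Module ℚ V]

def dl (Φ : V →ₗ[ℚ] V →ₗ[ℚ] ℚ) (K : Set V) : Set V :=
  {g | ∀ f ∈ K, ∃ z : ℤ, Φ f g = (z : ℚ)}

lemma rat_forall_int {a : ℚ} (h : ∀ q : ℚ, ∃ z : ℤ, q * a = (z : ℚ)) : a = 0 := by
  by_contra ha
  obtain ⟨z, hz⟩ := h (1 / (2 * a))
  have h1 : (1 : ℚ) / (2 * a) * a = 1 / 2 := by field_simp
  rw [h1] at hz
  have h2 : (2 * z : ℤ) = 1 := by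
    have : (2 * z : ℚ) = 1 := by rw [← hz]; ring
    exact_mod_cast this
  omega

def patSet {ι₁ ι₂ ι₃ : Type*} [Fintype ι₁] [Fintype ι₂] [Fintype ι₃]
    (B : Basis (ι₁ ⊕ ι₂ ⊕ ι₃) ℚ V) : Set V :=
  {x | (∀ i, ∃ z : ℤ, B.repr x (.inl i) = (z : ℚ)) ∧ ∀ k, B.repr x (.inr (.inr k)) = 0}

def swapE (ι₁ ι₂ ι₃ : Type*) : ι₁ ⊕ ι₂ ⊕ ι₃ ≃ ι₁ ⊕ ι₃ ⊕ ι₂ :=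
  (Equiv.refl ι₁).sumCongr (Equiv.sumComm ι₂ ι₃)

lemma pairing_repr (Φ : V →ₗ[ℚ] V →ₗ[ℚ] ℚ) {ι : Type*} [Fintype ι] [DecidableEq ι]
    (B D : Basis ι ℚ V) (hBD : ∀ i j, Φ (B i) (D j) = if i = j then 1 else 0)
    (f g : V) : Φ f g = ∑ i, B.repr f i * D.repr g i := by
  conv_lhs => rw [← B.sum_repr f, ← D.sum_repr g]
  simp only [map_sum, map_smul, LinearMap.sum_apply, LinearMap.smul_apply, hBD,
    smul_eq_mul, mul_ite, mul_one, mul_zero]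
  refine Finset.sum_congr rfl fun i _ => ?_
  rw [Finset.sum_ite_eq' Finset.univ i]
  simp [mul_comm]

variable {ι₁ ι₂ ι₃ : Type*} [Fintype ι₁] [Fintype ι₂] [Fintype ι₃]
  [DecidableEq ι₁] [DecidableEq ι₂] [DecidableEq ι₃]

lemma dl_patSet (Φ : V →ₗ[ℚ] V →ₗ[ℚ] ℚ)
    (B D : Basis (ι₁ ⊕ ι₂ ⊕ ι₃) ℚ V)
    (hBD : ∀ i j, Φ (B i) (D j) = if i = j then 1 else 0) :
    dl Φ (patSet B) = patSet (D.reindex (swapE ι₁ ι₂ ι₃)) := by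
  have key := pairing_repr Φ B D hBD
  ext g
  constructor
  · intro hg
    have hmid : ∀ j : ι₂, D.repr g (.inr (.inl j)) = 0 := by
      intro j
      apply rat_forall_int
      intro q
      have hmem : q • B (.inr (.inl j)) ∈ patSet B := by
        constructor
        · intro i
          exact ⟨0, by simp [Finsupp.single_apply]⟩
        · intro k
          simp [Finsupp.single_apply]
      obtain ⟨z, hz⟩ := hg _ hmem
      refine ⟨z, ?_⟩
      rw [key] at hz
      simp only [map_smul, Basis.repr_self, Finsupp.smul_single, smul_eq_mul, mul_one,
        Finsupp.single_apply, ite_mul, zero_mul] at hz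
      rw [Finset.sum_ite_eq Finset.univ] at hz
      simpa using hz
    refine ⟨?_, ?_⟩
    · intro i
      have hmem : B (.inl i) ∈ patSet B :=
        ⟨fun i' => ⟨if i = i' then 1 else 0, by simp only [Basis.repr_self, Finsupp.single_apply]; split <;> simp_all⟩,
          fun k => by simp [Finsupp.single_apply]⟩
      obtain ⟨z, hz⟩ := hg _ hmem
      refine ⟨z, ?_⟩
      rw [key] at hz
      simp only [Basis.repr_self, Finsupp.single_apply, ite_mul, zero_mul, one_mul] at hz
      rw [Finset.sum_ite_eq Finset.univ] at hz
      simp only [Finset.mem_univ, if_true] at hz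
      simpa [swapE] using hz
    · intro k
      simpa [swapE] using hmid k
  · rintro ⟨hZ, h0⟩ f ⟨hfZ, hf0⟩
    choose zf hzf using hfZ
    simp only [patSet, Basis.repr_reindex_apply, Set.mem_setOf_eq] at hZ h0
    choose zg hzg using hZ
    have hmid : ∀ j : ι₂, D.repr g (.inr (.inl j)) = 0 := by
      intro j; simpa [swapE] using h0 j
    refine ⟨∑ i, zf i * zg i, ?_⟩
    rw [key, Fintype.sum_sum_type, Fintype.sum_sum_type]
    have e1 : ∀ i : ι₁, B.repr f (.inl i) * D.repr g (.inl i) = ((zf i * zg i : ℤ) : ℚ) := by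
      intro i
      rw [hzf i]
      have : D.repr g (Sum.inl i) = (zg i : ℚ) := by simpa [swapE] using hzg i
      rw [this]; push_cast; ring
    rw [Finset.sum_congr rfl fun i _ => e1 i]
    have e2 : ∀ j : ι₂, B.repr f (.inr (.inl j)) * D.repr g (.inr (.inl j)) = 0 := by
      intro j; rw [hmid j, mul_zero]
    have e3 : ∀ k : ι₃, B.repr f (.inr (.inr k)) * D.repr g (.inr (.inr k)) = 0 := by
      intro k; rw [hf0 k, zero_mul]
    rw [Finset.sum_congr rfl fun j _ => e2 j, Finset.sum_congr rfl fun k _ => e3 k]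
    push_cast
    simp

lemma patSet_reindex_swap_swap (B : Basis (ι₁ ⊕ ι₂ ⊕ ι₃) ℚ V) :
    patSet ((B.reindex (swapE ι₁ ι₂ ι₃)).reindex (swapE ι₁ ι₃ ι₂)) = patSet B := by
  ext x
  simp [patSet, Basis.repr_reindex_apply, swapE]

lemma dl_dl_patSet (Φ : V →ₗ[ℚ] V →ₗ[ℚ] ℚ) (hsym : ∀ f g, Φ f g = Φ g f)
    (B D : Basis (ι₁ ⊕ ι₂ ⊕ ι₃) ℚ V)
    (hBD : ∀ i j, Φ (B i) (D j) = if i = j then 1 else 0) :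
    dl Φ (dl Φ (patSet B)) = patSet B := by
  rw [dl_patSet Φ B D hBD]
  have hDB : ∀ i j : ι₁ ⊕ ι₃ ⊕ ι₂,
      Φ ((D.reindex (swapE ι₁ ι₂ ι₃)) i) ((B.reindex (swapE ι₁ ι₂ ι₃)) j)
        = if i = j then 1 else 0 := by
    intro i j
    rw [Basis.reindex_apply, Basis.reindex_apply, hsym, hBD]
    by_cases h : i = j
    · simp [h]
    · have : (swapE ι₁ ι₂ ι₃).symm j ≠ (swapE ι₁ ι₂ ι₃).symm i := by
        simp [Equiv.symm_apply_eq]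
        intro hh; exact h (by simpa [Equiv.eq_symm_apply] using hh.symm)
      simp [h, this]
  rw [dl_patSet Φ (D.reindex (swapE ι₁ ι₂ ι₃)) (B.reindex (swapE ι₁ ι₂ ι₃)) hDB]
  exact patSet_reindex_swap_swap B

lemma exists_dual_basis [FiniteDimensional ℚ V] (Φ : V →ₗ[ℚ] V →ₗ[ℚ] ℚ)
    (hsym : ∀ f g, Φ f g = Φ g f) (hinj : Function.Injective Φ)
    {ι : Type*} [Fintype ι] [DecidableEq ι] (B : Basis ι ℚ V) :
    ∃ D : Basis ι ℚ V, ∀ i j, Φ (B i) (D j) = if i = j then 1 else 0 := by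
  have hsurj : Function.Surjective Φ := by
    have h : Module.finrank ℚ V = Module.finrank ℚ (Module.Dual ℚ V) :=
      (Subspace.dual_finrank_eq).symm
    exact (LinearMap.injective_iff_surjective_of_finrank_eq_finrank h).mp hinj
  let e : V ≃ₗ[ℚ] Module.Dual ℚ V := LinearEquiv.ofBijective Φ ⟨hinj, hsurj⟩
  refine ⟨B.dualBasis.map e.symm, ?_⟩
  intro i j
  rw [hsym]
  have : Φ (e.symm (B.dualBasis j)) = B.dualBasis j := by
    show e (e.symm _) = _
    simp
  calc Φ ((B.dualBasis.map e.symm) j) (B i)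
      = (B.dualBasis j) (B i) := by rw [Basis.map_apply, this]
    _ = if i = j then 1 else 0 := by
        rw [B.dualBasis_apply_self]

lemma isGenNumLat_combo {ι κ : Type*} [Fintype ι] [Fintype κ] (b : ι → V) (c : κ → V) :
    IsGenNumLat {x | ∃ (l : ι → ℤ) (m : κ → ℚ),
      x = (∑ i, (l i : ℚ) • b i) + ∑ j, m j • c j} := by
  refine ⟨Fintype.card ι, Fintype.card κ, b ∘ (Fintype.equivFin ι).symm,
    c ∘ (Fintype.equivFin κ).symm, ?_⟩
  ext x; simp only [Set.mem_setOf_eq]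
  constructor
  · rintro ⟨l, m, rfl⟩
    refine ⟨l ∘ (Fintype.equivFin ι).symm, m ∘ (Fintype.equivFin κ).symm, ?_⟩
    simp only [Function.comp_apply]
    congr 1
    · exact Fintype.sum_equiv (Fintype.equivFin ι)
        (fun i => (l i : ℚ) • b i)
        (fun x => (l ((Fintype.equivFin ι).symm x) : ℚ) • b ((Fintype.equivFin ι).symm x))
        (fun i => by simp)
    · exact Fintype.sum_equiv (Fintype.equivFin κ)
        (fun j => m j • c j)
        (fun x => m ((Fintype.equivFin κ).symm x) • c ((Fintype.equivFin κ).symm x))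
        (fun j => by simp)
  · rintro ⟨l, m, rfl⟩
    refine ⟨l ∘ (Fintype.equivFin ι), m ∘ (Fintype.equivFin κ), ?_⟩
    simp only [Function.comp_apply]
    congr 1
    · exact Fintype.sum_equiv (Fintype.equivFin ι).symm
        (fun x => (l x : ℚ) • b ((Fintype.equivFin ι).symm x))
        (fun i => (l (Fintype.equivFin ι i) : ℚ) • b i)
        (fun x => by simp)
    · exact Fintype.sum_equiv (Fintype.equivFin κ).symm
        (fun x => m x • c ((Fintype.equivFin κ).symm x))
        (fun j => m (Fintype.equivFin κ j) • c j)
        (fun x => by simp)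

lemma combo_repr (B : Basis (ι₁ ⊕ ι₂ ⊕ ι₃) ℚ V) (a : ι₁ → ℚ) (m : ι₂ → ℚ)
    (j0 : ι₁ ⊕ ι₂ ⊕ ι₃) :
    B.repr ((∑ i, a i • B (.inl i)) + ∑ j, m j • B (.inr (.inl j))) j0 =
      Sum.elim a (Sum.elim m (fun _ => 0)) j0 := by
  rw [map_add, map_sum, map_sum]
  simp only [map_smul, Basis.repr_self, Finsupp.coe_add, Pi.add_apply,
    Finsupp.coe_finset_sum, Finset.sum_apply, Finsupp.smul_apply,
    Finsupp.single_apply, smul_eq_mul, mul_ite, mul_one, mul_zero]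
  rcases j0 with i0 | j0
  · simp [Finset.sum_ite_eq' Finset.univ i0]
  · rcases j0 with j0 | k0
    · simp [Finset.sum_ite_eq' Finset.univ j0]
    · simp

lemma patSet_eq_combo (B : Basis (ι₁ ⊕ ι₂ ⊕ ι₃) ℚ V) :
    patSet B = {x | ∃ (l : ι₁ → ℤ) (m : ι₂ → ℚ),
      x = (∑ i, (l i : ℚ) • B (.inl i)) + ∑ j, m j • B (.inr (.inl j))} := by
  ext x
  constructor
  · rintro ⟨hZ, h0⟩
    choose z hz using hZ
    refine ⟨z, fun j => B.repr x (.inr (.inl j)), ?_⟩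
    have hx := B.sum_repr x
    conv_lhs => rw [← hx]
    rw [Fintype.sum_sum_type, Fintype.sum_sum_type]
    have h3 : ∑ k : ι₃, B.repr x (.inr (.inr k)) • B (.inr (.inr k)) = 0 := by
      refine Finset.sum_eq_zero fun k _ => by rw [h0 k, zero_smul]
    rw [h3, add_zero]
    congr 1
    exact Finset.sum_congr rfl fun i _ => by rw [hz i]
  · rintro ⟨l, m, rfl⟩
    constructor
    · intro i
      exact ⟨l i, by rw [combo_repr]; simp⟩
    · intro k
      rw [combo_repr]; simp

lemma range_sum_elim {α β γ : Type*} (f : α → γ) (g : β → γ) :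
    Set.range (Sum.elim f g) = Set.range f ∪ Set.range g := by
  ext x; simp [Sum.exists]

lemma exists_patSet_basis [FiniteDimensional ℚ V] {K : Set V} (hK : IsGenNumLat K) :
    ∃ (r s t : ℕ) (B : Basis (Fin r ⊕ Fin s ⊕ Fin t) ℚ V), K = patSet B := by
  obtain ⟨n, k, b, c, rfl⟩ := hK
  -- the subspace part and the lattice part
  set W : Submodule ℚ V := Submodule.span ℚ (Set.range c) with hW
  set M : Submodule ℤ V := Submodule.span ℤ (Set.range b) with hM
  let πz : V →ₗ[ℤ] V ⧸ W := W.mkQ.restrictScalars ℤ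
  set M' : Submodule ℤ (V ⧸ W) := M.map πz with hM'
  haveI : Module.Finite ℤ M' :=
    Module.Finite.iff_fg.mpr ((Submodule.fg_span (Set.finite_range b)).map πz)
  haveI : NoZeroSMulDivisors ℤ (V ⧸ W) := by
    constructor
    intro z x hzx
    by_cases hz : z = 0
    · exact Or.inl hz
    · right
      have : ((z : ℚ)) • x = 0 := by rw [Int.cast_smul_eq_zsmul]; exact hzx
      rcases smul_eq_zero.mp this with h | h
      · exact absurd (by exact_mod_cast h) hz
      · exact h
  haveI : NoZeroSMulDivisors ℤ M' :=
    Function.Injective.noZeroSMulDivisors (fun x : M' => (x : V ⧸ W)) Subtype.coe_injective rfl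
      (fun _ _ => rfl)
  haveI : Module.Free ℤ M' := Module.free_of_finite_type_torsion_free'
  let β0 := Module.Free.chooseBasis ℤ M'
  set r := Fintype.card (Module.Free.ChooseBasisIndex ℤ M') with hr
  let β : Basis (Fin r) ℤ M' := β0.reindex (Fintype.equivFin _)
  -- lift the lattice basis
  have hlift : ∀ i : Fin r, ∃ y, y ∈ M ∧ πz y = (β i : V ⧸ W) :=
    fun i => Submodule.mem_map.mp (β i).2
  choose v hvM hv using hlift
  -- basis of W
  set s := Module.finrank ℚ W with hs
  let ww := Module.finBasis ℚ W
  let w : Fin s → V := fun j => (ww j : V)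
  have hw_span : Submodule.span ℚ (Set.range w) = W := by
    have : Set.range w = W.subtype '' Set.range ww := by
      rw [← Set.range_comp]; rfl
    rw [this, ← Submodule.map_span, ww.span_eq, Submodule.map_top, Submodule.range_subtype]
  have hw_ind : LinearIndependent ℚ w :=
    ww.linearIndependent.map' W.subtype W.ker_subtype
  -- independence of the lifted vectors
  have hβV : LinearIndependent ℤ (fun i => (β i : V ⧸ W)) :=
    β.linearIndependent.map' M'.subtype M'.ker_subtype
  have hπv_eq : (fun i => πz (v i)) = fun i => (β i : V ⧸ W) := funext fun i => hv i
  have hπvQ : LinearIndependent ℚ (fun i => πz (v i)) := by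
    rw [hπv_eq]
    exact (LinearIndependent.iff_fractionRing ℤ ℚ).mp hβV
  have hπvQ' : LinearIndependent ℚ (W.mkQ ∘ v) := hπvQ
  have hv_ind : LinearIndependent ℚ v := LinearIndependent.of_comp W.mkQ hπvQ'
  have hdisj : Disjoint (Submodule.span ℚ (Set.range v)) (Submodule.span ℚ (Set.range w)) := by
    rw [hw_span, Submodule.disjoint_def]
    intro x hx hxW
    obtain ⟨a, ha⟩ := (Submodule.mem_span_range_iff_exists_fun ℚ).mp hx
    have hπx : W.mkQ x = 0 := (Submodule.Quotient.mk_eq_zero W).mpr hxW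
    have : ∑ i, a i • W.mkQ (v i) = 0 := by
      rw [← hπx, ← ha, map_sum]
      exact Finset.sum_congr rfl fun i _ => (map_smul W.mkQ (a i) (v i)).symm
    have ha0 : ∀ i, a i = 0 := Fintype.linearIndependent_iff.mp hπvQ' a this
    rw [← ha]
    exact Finset.sum_eq_zero fun i _ => by rw [ha0 i, zero_smul]
  have he_ind : LinearIndependent ℚ (Sum.elim v w) := hv_ind.sum_type hw_ind hdisj
  -- complement
  set E := Submodule.span ℚ (Set.range (Sum.elim v w)) with hE
  obtain ⟨U, hU⟩ := Submodule.exists_isCompl E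
  set t := Module.finrank ℚ U with ht
  let uu := Module.finBasis ℚ U
  let u : Fin t → V := fun j => (uu j : V)
  have hu_span : Submodule.span ℚ (Set.range u) = U := by
    have : Set.range u = U.subtype '' Set.range uu := by
      rw [← Set.range_comp]; rfl
    rw [this, ← Submodule.map_span, uu.span_eq, Submodule.map_top, Submodule.range_subtype]
  have hu_ind : LinearIndependent ℚ u :=
    uu.linearIndependent.map' U.subtype U.ker_subtype
  have hbig_ind : LinearIndependent ℚ (Sum.elim (Sum.elim v w) u) := by
    refine he_ind.sum_type hu_ind ?_
    rw [hu_span, ← hE]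
    exact hU.disjoint
  have hbig_span : ⊤ ≤ Submodule.span ℚ (Set.range (Sum.elim (Sum.elim v w) u)) := by
    rw [range_sum_elim, Submodule.span_union, hu_span, ← hE]
    exact le_of_eq hU.sup_eq_top.symm
  let B0 : Basis ((Fin r ⊕ Fin s) ⊕ Fin t) ℚ V := Basis.mk hbig_ind hbig_span
  let B : Basis (Fin r ⊕ Fin s ⊕ Fin t) ℚ V := B0.reindex (Equiv.sumAssoc _ _ _)
  refine ⟨r, s, t, B, ?_⟩
  have hBinl : ∀ i : Fin r, B (.inl i) = v i := by
    intro i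
    simp only [B, Basis.reindex_apply, B0, Equiv.sumAssoc, Equiv.coe_fn_symm_mk,
      Basis.mk_apply]
    rfl
  have hBmid : ∀ j : Fin s, B (.inr (.inl j)) = w j := by
    intro j
    simp only [B, Basis.reindex_apply, B0, Equiv.sumAssoc, Equiv.coe_fn_symm_mk,
      Basis.mk_apply]
    rfl
  rw [patSet_eq_combo]
  simp only [hBinl, hBmid]
  -- cast helper
  have hcast : ∀ {p : ℕ} (l : Fin p → ℤ) (x : Fin p → V),
      (∑ i, (l i : ℚ) • x i) = ∑ i, l i • x i :=
    fun l x => Finset.sum_congr rfl fun i _ => by rw [Int.cast_smul_eq_zsmul]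
  -- the key structural claim
  have claimC : ∀ p ∈ M, ∃ (l' : Fin r → ℤ) (y : V), y ∈ W ∧ p = (∑ i, (l' i : ℚ) • v i) + y := by
    intro p hp
    have hmem : πz p ∈ M' := Submodule.mem_map.mpr ⟨p, hp, rfl⟩
    set pe : M' := ⟨πz p, hmem⟩ with hpe
    refine ⟨fun i => β.repr pe i, p - ∑ i, ((β.repr pe i : ℚ)) • v i, ?_,
      by rw [add_comm, sub_add_cancel]⟩
    rw [← Submodule.Quotient.mk_eq_zero W]
    have h1 : (∑ i, β.repr pe i • β i) = pe := β.sum_repr pe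
    have h2 : (∑ i, β.repr pe i • (β i : V ⧸ W)) = πz p := by
      have h := congrArg (M'.subtype) h1
      rw [map_sum] at h
      have hterm : ∀ i : Fin r, M'.subtype (β.repr pe i • β i) = β.repr pe i • (β i : V ⧸ W) :=
        fun i => map_smul M'.subtype _ _
      rw [Finset.sum_congr rfl fun i _ => hterm i] at h
      exact h
    have h3 : W.mkQ (∑ i, ((β.repr pe i : ℚ)) • v i) = πz p := by
      rw [map_sum, ← h2]
      refine Finset.sum_congr rfl fun i _ => ?_
      rw [map_smul, Int.cast_smul_eq_zsmul, ← hv i]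
      rfl
    have : W.mkQ (p - ∑ i, ((β.repr pe i : ℚ)) • v i) = 0 := by
      rw [map_sub, h3]
      show W.mkQ p - πz p = 0
      simp [πz]
    rwa [Submodule.mkQ_apply] at this
  -- final set equality
  ext x
  simp only [Set.mem_setOf_eq]
  constructor
  · rintro ⟨l, m, rfl⟩
    have hpM : (∑ i, (l i : ℚ) • b i) ∈ M := by
      rw [hcast]
      exact Submodule.sum_mem _ fun i _ =>
        Submodule.smul_mem _ _ (Submodule.subset_span ⟨i, rfl⟩)
    have hqW : (∑ j, m j • c j) ∈ W :=
      Submodule.sum_mem _ fun j _ =>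
        Submodule.smul_mem _ _ (Submodule.subset_span ⟨j, rfl⟩)
    obtain ⟨l', y, hyW, hy⟩ := claimC _ hpM
    have hyq : y + ∑ j, m j • c j ∈ W := W.add_mem hyW hqW
    rw [← hw_span] at hyq
    obtain ⟨m', hm'⟩ := (Submodule.mem_span_range_iff_exists_fun ℚ).mp hyq
    exact ⟨l', m', by rw [hy, add_assoc, ← hm']⟩
  · rintro ⟨l', m', rfl⟩
    have h1 : (∑ i, (l' i : ℚ) • v i) ∈ M := by
      rw [hcast]
      exact Submodule.sum_mem _ fun i _ => Submodule.smul_mem _ _ (hvM i)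
    obtain ⟨l, hl⟩ := (Submodule.mem_span_range_iff_exists_fun ℤ).mp h1
    have h2 : (∑ j, m' j • w j) ∈ Submodule.span ℚ (Set.range c) := by
      have : (∑ j, m' j • w j) ∈ W := by
        rw [← hw_span]
        exact Submodule.sum_mem _ fun j _ =>
          Submodule.smul_mem _ _ (Submodule.subset_span ⟨j, rfl⟩)
      rwa [hW] at this
    obtain ⟨m, hm⟩ := (Submodule.mem_span_range_iff_exists_fun ℚ).mp h2
    refine ⟨l, m, ?_⟩
    rw [hcast l b, hl, hm]

lemma zero_mem_of_isGenNumLat {K : Set V} (hK : IsGenNumLat K) : 0 ∈ K := by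
  obtain ⟨n, k, b, c, rfl⟩ := hK
  exact ⟨0, 0, by simp⟩

lemma zero_mem_dl (Φ : V →ₗ[ℚ] V →ₗ[ℚ] ℚ) {K : Set V} : 0 ∈ dl Φ K :=
  fun f _ => ⟨0, by simp⟩

lemma neg_mem_dl (Φ : V →ₗ[ℚ] V →ₗ[ℚ] ℚ) {K : Set V} {g : V} (hg : g ∈ dl Φ K) :
    -g ∈ dl Φ K := by
  intro f hf
  obtain ⟨z, hz⟩ := hg f hf
  exact ⟨-z, by rw [map_neg, hz]; push_cast; ring⟩

theorem dl_dl_eq [FiniteDimensional ℚ V] (Φ : V →ₗ[ℚ] V →ₗ[ℚ] ℚ)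
    (hsym : ∀ f g, Φ f g = Φ g f) (hinj : Function.Injective Φ)
    {K : Set V} (hK : IsGenNumLat K) : dl Φ (dl Φ K) = K := by
  obtain ⟨r, s, t, B, rfl⟩ := exists_patSet_basis hK
  obtain ⟨D, hBD⟩ := exists_dual_basis Φ hsym hinj B
  exact dl_dl_patSet Φ hsym B D hBD

theorem isGenNumLat_dl [FiniteDimensional ℚ V] (Φ : V →ₗ[ℚ] V →ₗ[ℚ] ℚ)
    (hsym : ∀ f g, Φ f g = Φ g f) (hinj : Function.Injective Φ)
    {K : Set V} (hK : IsGenNumLat K) : IsGenNumLat (dl Φ K) := by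
  obtain ⟨r, s, t, B, rfl⟩ := exists_patSet_basis hK
  obtain ⟨D, hBD⟩ := exists_dual_basis Φ hsym hinj B
  rw [dl_patSet Φ B D hBD, patSet_eq_combo]
  exact isGenNumLat_combo _ _

def sSum (A B : Set V) : Set V := {x | ∃ a ∈ A, ∃ b ∈ B, x = a + b}

lemma isGenNumLat_sSum {A B : Set V} (hA : IsGenNumLat A) (hB : IsGenNumLat B) :
    IsGenNumLat (sSum A B) := by
  obtain ⟨n1, k1, b1, c1, rfl⟩ := hA
  obtain ⟨n2, k2, b2, c2, rfl⟩ := hB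
  have : sSum {x | ∃ (l : Fin n1 → ℤ) (m : Fin k1 → ℚ),
        x = (∑ i, (l i : ℚ) • b1 i) + ∑ j, m j • c1 j}
      {x | ∃ (l : Fin n2 → ℤ) (m : Fin k2 → ℚ),
        x = (∑ i, (l i : ℚ) • b2 i) + ∑ j, m j • c2 j}
      = {x | ∃ (l : Fin n1 ⊕ Fin n2 → ℤ) (m : Fin k1 ⊕ Fin k2 → ℚ),
        x = (∑ i, (l i : ℚ) • Sum.elim b1 b2 i) + ∑ j, m j • Sum.elim c1 c2 j} := by
    ext x
    constructor
    · rintro ⟨a, ⟨la, ma, rfl⟩, b, ⟨lb, mb, rfl⟩, rfl⟩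
      refine ⟨Sum.elim la lb, Sum.elim ma mb, ?_⟩
      rw [Fintype.sum_sum_type, Fintype.sum_sum_type]
      simp only [Sum.elim_inl, Sum.elim_inr]
      abel
    · rintro ⟨l, m, rfl⟩
      refine ⟨(∑ i, ((l (.inl i) : ℚ)) • b1 i) + ∑ j, m (.inl j) • c1 j,
        ⟨fun i => l (.inl i), fun j => m (.inl j), rfl⟩,
        (∑ i, ((l (.inr i) : ℚ)) • b2 i) + ∑ j, m (.inr j) • c2 j,
        ⟨fun i => l (.inr i), fun j => m (.inr j), rfl⟩, ?_⟩
      rw [Fintype.sum_sum_type, Fintype.sum_sum_type]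
      simp only [Sum.elim_inl, Sum.elim_inr]
      abel
  rw [this]
  exact isGenNumLat_combo _ _

lemma dl_sSum (Φ : V →ₗ[ℚ] V →ₗ[ℚ] ℚ) {A B : Set V} (hA0 : 0 ∈ A) (hB0 : 0 ∈ B) :
    dl Φ (sSum A B) = dl Φ A ∩ dl Φ B := by
  ext g
  constructor
  · intro hg
    exact ⟨fun f hf => hg f ⟨f, hf, 0, hB0, by simp⟩,
      fun f hf => hg f ⟨0, hA0, f, hf, by simp⟩⟩
  · rintro ⟨hgA, hgB⟩ f ⟨a, ha, b, hb, rfl⟩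
    obtain ⟨z1, h1⟩ := hgA a ha
    obtain ⟨z2, h2⟩ := hgB b hb
    exact ⟨z1 + z2, by rw [map_add, LinearMap.add_apply, h1, h2]; push_cast; ring⟩

theorem dl_inter [FiniteDimensional ℚ V] (Φ : V →ₗ[ℚ] V →ₗ[ℚ] ℚ)
    (hsym : ∀ f g, Φ f g = Φ g f) (hinj : Function.Injective Φ)
    {A B : Set V} (hA : IsGenNumLat A) (hB : IsGenNumLat B) :
    dl Φ (A ∩ B) = sSum (dl Φ A) (dl Φ B) := by
  have h1 : A ∩ B = dl Φ (sSum (dl Φ A) (dl Φ B)) := by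
    rw [dl_sSum Φ (zero_mem_dl Φ) (zero_mem_dl Φ), dl_dl_eq Φ hsym hinj hA,
      dl_dl_eq Φ hsym hinj hB]
  rw [h1, dl_dl_eq Φ hsym hinj
    (isGenNumLat_sSum (isGenNumLat_dl Φ hsym hinj hA) (isGenNumLat_dl Φ hsym hinj hB))]

end Abstract

section Inst

def ΦX (X : Type*) [Fintype X] : (X → ℚ) →ₗ[ℚ] (X → ℚ) →ₗ[ℚ] ℚ :=
  LinearMap.mk₂ ℚ (fun f g => ∑ x, f x * g x)
    (fun f f' g => by simp [add_mul, Finset.sum_add_distrib])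
    (fun q f g => by
      simp only [Pi.smul_apply, smul_eq_mul]
      rw [Finset.mul_sum]
      exact Finset.sum_congr rfl fun x _ => by ring)
    (fun f g g' => by simp [mul_add, Finset.sum_add_distrib])
    (fun q f g => by
      simp only [Pi.smul_apply, smul_eq_mul]
      rw [Finset.mul_sum]
      exact Finset.sum_congr rfl fun x _ => by ring)

@[simp] lemma ΦX_apply {X : Type*} [Fintype X] (f g : X → ℚ) :
    ΦX X f g = ∑ x, f x * g x := rfl

lemma ΦX_symm {X : Type*} [Fintype X] (f g : X → ℚ) : ΦX X f g = ΦX X g f := by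
  simp [mul_comm]

lemma ΦX_inj {X : Type*} [Fintype X] : Function.Injective (ΦX X) := by
  classical
  intro f f' h
  funext x
  have h1 := congrArg (fun Ψ => Ψ (Pi.single x 1)) h
  simp only [ΦX_apply] at h1
  have e : ∀ u : X → ℚ, ∑ y, u y * (Pi.single x 1 : X → ℚ) y = u x := by
    intro u
    rw [Finset.sum_eq_single x] <;> simp +contextual [Pi.single_apply]
  show f x = f' x
  calc f x = ΦX X f (Pi.single x 1) := (e f).symm
    _ = ΦX X f' (Pi.single x 1) := by rw [h]
    _ = f' x := e f'

variable {S P : Type*} [Fintype S] [Fintype P]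

def Φ2 (S P : Type*) [Fintype S] [Fintype P] :
    ((S → ℚ) × (P → ℚ)) →ₗ[ℚ] ((S → ℚ) × (P → ℚ)) →ₗ[ℚ] ℚ :=
  LinearMap.mk₂ ℚ (fun f g => (∑ a, f.1 a * g.1 a) + ∑ b, f.2 b * g.2 b)
    (fun f f' g => by simp [add_mul, Finset.sum_add_distrib]; ring)
    (fun q f g => by
      simp only [Prod.smul_fst, Prod.smul_snd, Pi.smul_apply, smul_eq_mul, mul_add]
      rw [Finset.mul_sum, Finset.mul_sum]
      congr 1 <;> exact Finset.sum_congr rfl fun x _ => by ring)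
    (fun f g g' => by simp [mul_add, Finset.sum_add_distrib]; ring)
    (fun q f g => by
      simp only [Prod.smul_fst, Prod.smul_snd, Pi.smul_apply, smul_eq_mul, mul_add]
      rw [Finset.mul_sum, Finset.mul_sum]
      congr 1 <;> exact Finset.sum_congr rfl fun x _ => by ring)

@[simp] lemma Φ2_apply (f g : (S → ℚ) × (P → ℚ)) :
    Φ2 S P f g = (∑ a, f.1 a * g.1 a) + ∑ b, f.2 b * g.2 b := rfl

lemma Φ2_symm (f g : (S → ℚ) × (P → ℚ)) : Φ2 S P f g = Φ2 S P g f := by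
  simp [mul_comm]

lemma Φ2_inj : Function.Injective (Φ2 S P) := by
  classical
  intro f f' h
  have e1 : ∀ (u : (S → ℚ) × (P → ℚ)) (x : S),
      Φ2 S P u (Pi.single x 1, 0) = u.1 x := by
    intro u x
    simp only [Φ2_apply]
    rw [Finset.sum_eq_single x] <;> simp +contextual [Pi.single_apply]
  have e2 : ∀ (u : (S → ℚ) × (P → ℚ)) (y : P),
      Φ2 S P u (0, Pi.single y 1) = u.2 y := by
    intro u y
    simp only [Φ2_apply]
    rw [Finset.sum_eq_single y] <;> simp +contextual [Pi.single_apply]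
  ext x
  · rw [← e1 f x, ← e1 f' x, h]
  · rw [← e2 f x, ← e2 f' x, h]

lemma dl_ΦX_eq {X : Type*} [Fintype X] (K : Set (X → ℚ)) : dl (ΦX X) K = dualLat K := rfl

lemma dl_Φ2_eq (K : Set ((S → ℚ) × (P → ℚ))) : dl (Φ2 S P) K = dualLat2 K := rfl

end Inst

section Main

variable {S P : Type*} [Fintype S] [Fintype P]

lemma isGenNumLat_sndSet {KP : Set (P → ℚ)} (h2 : IsGenNumLat KP) :
    IsGenNumLat {x : (S → ℚ) × (P → ℚ) | x.2 ∈ KP} := by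
  classical
  obtain ⟨n, k, b, c, rfl⟩ := h2
  have heq : {x : (S → ℚ) × (P → ℚ) | x.2 ∈ {x | ∃ (l : Fin n → ℤ) (m : Fin k → ℚ),
        x = (∑ i, (l i : ℚ) • b i) + ∑ j, m j • c j}}
      = {x : (S → ℚ) × (P → ℚ) | ∃ (l : Fin n → ℤ) (m : Fin k ⊕ S → ℚ),
        x = (∑ i, (l i : ℚ) • ((0 : S → ℚ), b i)) +
          ∑ j, m j • Sum.elim (fun j' => ((0 : S → ℚ), c j'))
            (fun s => ((Pi.single s 1 : S → ℚ), (0 : P → ℚ))) j} := by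
    ext ⟨f, h⟩
    simp only [Set.mem_setOf_eq]
    have hfst : ∀ (l : Fin n → ℤ) (m : Fin k ⊕ S → ℚ),
        ((∑ i, (l i : ℚ) • ((0 : S → ℚ), b i)) +
          ∑ j, m j • Sum.elim (fun j' => ((0 : S → ℚ), c j'))
            (fun s => ((Pi.single s 1 : S → ℚ), (0 : P → ℚ))) j).1
        = fun s => m (.inr s) := by
      intro l m
      funext s'
      simp only [Prod.fst_add, Prod.fst_sum, Prod.smul_fst, smul_zero,
        Finset.sum_const, smul_eq_mul, Pi.add_apply, Finset.sum_apply]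
      rw [Fintype.sum_sum_type]
      simp [Pi.single_apply, Finset.sum_ite_eq' Finset.univ s']
    have hsnd : ∀ (l : Fin n → ℤ) (m : Fin k ⊕ S → ℚ),
        ((∑ i, (l i : ℚ) • ((0 : S → ℚ), b i)) +
          ∑ j, m j • Sum.elim (fun j' => ((0 : S → ℚ), c j'))
            (fun s => ((Pi.single s 1 : S → ℚ), (0 : P → ℚ))) j).2
        = (∑ i, (l i : ℚ) • b i) + ∑ j, m (.inl j) • c j := by
      intro l m
      simp only [Prod.snd_add, Prod.snd_sum, Prod.smul_snd]
      congr 1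
      rw [Fintype.sum_sum_type]
      simp
    constructor
    · rintro ⟨l, m, hh⟩
      refine ⟨l, Sum.elim m f, ?_⟩
      apply Prod.ext
      · rw [hfst]; rfl
      · rw [hsnd]; exact hh
    · rintro ⟨l, m, hh⟩
      refine ⟨l, fun j => m (.inl j), ?_⟩
      have := congrArg Prod.snd hh
      rw [hsnd] at this
      exact this
  rw [heq]
  exact isGenNumLat_combo _ _

lemma dualLat_neg {X : Type*} [Fintype X] {K : Set (X → ℚ)} {g : X → ℚ}
    (hg : g ∈ dualLat K) : -g ∈ dualLat K := by
  intro f hf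
  obtain ⟨z, hz⟩ := hg f hf
  refine ⟨-z, ?_⟩
  push_cast
  rw [← hz, ← Finset.sum_neg_distrib]
  exact Finset.sum_congr rfl fun x _ => by simp [Pi.neg_apply]

lemma dl_sndSet_sub {KP : Set (P → ℚ)} (h0 : (0 : P → ℚ) ∈ KP)
    {y : (S → ℚ) × (P → ℚ)} (hy : y ∈ dl (Φ2 S P) {x : (S → ℚ) × (P → ℚ) | x.2 ∈ KP}) :
    y.1 = 0 ∧ y.2 ∈ dualLat KP := by
  classical
  constructor
  · funext s
    apply rat_forall_int
    intro q
    obtain ⟨z, hz⟩ := hy ((q • (Pi.single s 1 : S → ℚ)), (0 : P → ℚ)) (by exact h0)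
    refine ⟨z, ?_⟩
    rw [← hz]
    show q * y.1 s = _
    simp only [Φ2_apply, Pi.smul_apply, smul_eq_mul]
    rw [Finset.sum_eq_single s]
    · simp
    · intro x _ hx; simp [Pi.single_apply, hx]
    · simp
  · intro f hf
    obtain ⟨z, hz⟩ := hy ((0 : S → ℚ), f) hf
    refine ⟨z, ?_⟩
    rw [← hz]
    simp

theorem implicit_duality {KSP : Set ((S → ℚ) × (P → ℚ))} {KP : Set (P → ℚ)}
    (h1 : IsGenNumLat KSP) (h2 : IsGenNumLat KP) :
    dualLat {fS | ∃ h ∈ KP, (fS, h) ∈ KSP} =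
      {fS | ∃ h ∈ dualLat KP, (fS, h) ∈ dualLat2 KSP} := by
  classical
  ext g
  constructor
  · intro hg
    set Bset : Set ((S → ℚ) × (P → ℚ)) := {x | x.2 ∈ KP} with hBset
    have hBlat : IsGenNumLat Bset := isGenNumLat_sndSet h2
    have hg0 : ((g, (0 : P → ℚ)) : (S → ℚ) × (P → ℚ)) ∈ dl (Φ2 S P) (KSP ∩ Bset) := by
      rintro ⟨f, h⟩ ⟨hfK, hfB⟩
      obtain ⟨z, hz⟩ := hg f ⟨h, hfB, hfK⟩
      exact ⟨z, by simpa using hz⟩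
    rw [dl_inter (Φ2 S P) Φ2_symm Φ2_inj h1 hBlat] at hg0
    obtain ⟨x, hx, y, hyd, hxy⟩ := hg0
    obtain ⟨hy1, hy2⟩ := dl_sndSet_sub (zero_mem_of_isGenNumLat h2) hyd
    have hx_eq : x = ((g, -y.2) : (S → ℚ) × (P → ℚ)) := by
      have h1' := congrArg Prod.fst hxy
      have h2' := congrArg Prod.snd hxy
      simp only [Prod.fst_add, Prod.snd_add] at h1' h2'
      apply Prod.ext
      · rw [hy1, add_zero] at h1'; exact h1'.symm
      · have : x.2 + y.2 = 0 := h2'.symm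
        simp only []
        linear_combination (norm := module) this
    refine ⟨-y.2, dualLat_neg hy2, ?_⟩
    rw [← hx_eq]
    exact hx
  · rintro ⟨h, hhd, hpair⟩ f ⟨hp, hhp, hfK⟩
    obtain ⟨z1, hz1⟩ := hpair (f, hp) hfK
    obtain ⟨z2, hz2⟩ := hhd hp hhp
    refine ⟨z1 - z2, ?_⟩
    push_cast
    rw [← hz1, ← hz2]
    ring

end Main

lemma isGenNumLat_submodule {V : Type*} [AddCommGroup V] [Module ℚ V] [FiniteDimensional ℚ V]
    (W : Submodule ℚ V) : IsGenNumLat (W : Set V) := by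
  obtain ⟨T, hT⟩ := (Module.Finite.iff_fg.mp inferInstance : W.FG)
  have heq : (W : Set V) = {x | ∃ (l : Fin 0 → ℤ) (m : {t // t ∈ T} → ℚ),
      x = (∑ i, (l i : ℚ) • (0 : V)) + ∑ j, m j • (j : V)} := by
    ext x
    simp only [Set.mem_setOf_eq, SetLike.mem_coe]
    constructor
    · intro hx
      rw [← hT] at hx
      have hx' : x ∈ Submodule.span ℚ (Set.range (fun t : {t // t ∈ T} => (t : V))) := by
        have hrng : (Set.range fun t : {t // t ∈ T} => (t : V)) = (↑T : Set V) := by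
          ext y; simp
        rwa [hrng]
      obtain ⟨m, hm⟩ := (Submodule.mem_span_range_iff_exists_fun ℚ).mp hx'
      exact ⟨fun i => 0, m, by simp [← hm]⟩
    · rintro ⟨l, m, rfl⟩
      refine W.add_mem (by simp) ?_
      exact Submodule.sum_mem _ fun j _ => W.smul_mem _
        (by rw [← hT]; exact Submodule.subset_span j.2)
  rw [heq]
  exact isGenNumLat_combo _ _

lemma dualLat2_submodule {S P : Type*} [Fintype S] [Fintype P]
    (Vs : Submodule ℚ ((S → ℚ) × (P → ℚ))) :
    dualLat2 (Vs : Set ((S → ℚ) × (P → ℚ))) =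
      {g | ∀ f ∈ Vs, (∑ a, f.1 a * g.1 a) + ∑ b, f.2 b * g.2 b = 0} := by
  ext g
  constructor
  · intro hg f hf
    apply rat_forall_int
    intro q
    obtain ⟨z, hz⟩ := hg (q • f) (Vs.smul_mem q hf)
    refine ⟨z, ?_⟩
    rw [← hz]
    show q * Φ2 S P f g = Φ2 S P (q • f) g
    rw [map_smul, LinearMap.smul_apply, smul_eq_mul]
  · intro hg f hf
    exact ⟨0, by rw [hg f hf]; simp⟩

/-- Implicit duality for a single ground set: `(K_SP ↔ K_P)ᵈ = K_SPᵈ ↔ K_Pᵈ`,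
and for a vector space `V_SP`, `(V_SP ↔ K_P)ᵈ = V_SPᗮ ↔ K_Pᵈ`. -/
theorem stmt8 {S P : Type*} [Fintype S] [Fintype P]
    (KSP : Set ((S → ℚ) × (P → ℚ))) (KP : Set (P → ℚ))
    (h1 : IsGenNumLat KSP) (h2 : IsGenNumLat KP) :
    dualLat {fS | ∃ h ∈ KP, (fS, h) ∈ KSP} =
      {fS | ∃ h ∈ dualLat KP, (fS, h) ∈ dualLat2 KSP} ∧
    ∀ V : Submodule ℚ ((S → ℚ) × (P → ℚ)),
      dualLat {fS | ∃ h ∈ KP, (fS, h) ∈ V} =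
        {fS | ∃ h ∈ dualLat KP,
          ((fS, h) : (S → ℚ) × (P → ℚ)) ∈
            {g | ∀ f ∈ V, (∑ a, f.1 a * g.1 a) + ∑ b, f.2 b * g.2 b = 0}} := by
  refine ⟨implicit_duality h1 h2, ?_⟩
  intro Vs
  have key := implicit_duality (isGenNumLat_submodule Vs) h2
  rw [dualLat2_submodule] at key
  exact key
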